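/- Let k ≥ 2, let T be a finite color set, let R be a k-vertex T-edge-colored complete graph, and let H be an n-vertex T-edge-colored complete graph with I(R,H) = I(R,n) (i.e., H maximizes the number of induced copies of R among n-vertex T-edge-colored complete graphs). For v ∈ V(H) let d(v) be the number of k-subsets of V(H) containing v whose induced coloring is isomorphic to R. Then for all x, y ∈ V(H), |d(x) − d(y)| ≤ binom(n−2, k−2). -/

import Mathlib

open Finset Filter

open scoped Classical
set_option maxHeartbeats 1000000

section Defs

variable {T : Type}

/-- A coloring of the complete graph is symmetric. -/
def IsSym {V : Type} (χ : V → V → T) : Prop := ∀ u v, χ u v = χ v u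

/-- `copyCount k n R χ` : the number of `k`-element subsets of `Fin n` whose coloring
induced by `χ` is isomorphic (as an edge-colored complete graph) to `R`. -/
noncomputable def copyCount (k n : ℕ) (R : Fin k → Fin k → T) (χ : Fin n → Fin n → T) : ℕ :=
  ((Finset.powersetCard k (Finset.univ : Finset (Fin n))).filter
    (fun S => ∃ φ : Fin k → Fin n, Function.Injective φ ∧ (∀ a, φ a ∈ S) ∧
      ∀ a b : Fin k, a ≠ b → χ (φ a) (φ b) = R a b)).card

/-- `maxCopyCount k n R = I(R,n)` : the maximum of `copyCount` over all symmetric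
`T`-colorings of the complete graph on `n` vertices. -/
noncomputable def maxCopyCount [Fintype T] (k n : ℕ) (R : Fin k → Fin k → T) : ℕ :=
  Finset.sup ((Finset.univ : Finset (Fin n → Fin n → T)).filter (fun χ => IsSym χ))
    (fun χ => copyCount k n R χ)

/-- `vertDeg k n R χ x = d(x)` : the number of `k`-subsets containing `x` whose induced
coloring is isomorphic to `R`. -/
noncomputable def vertDeg (k n : ℕ) (R : Fin k → Fin k → T) (χ : Fin n → Fin n → T)
    (x : Fin n) : ℕ :=
  ((Finset.powersetCard k (Finset.univ : Finset (Fin n))).filter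
    (fun S => x ∈ S ∧ ∃ φ : Fin k → Fin n, Function.Injective φ ∧ (∀ a, φ a ∈ S) ∧
      ∀ a b : Fin k, a ≠ b → χ (φ a) (φ b) = R a b)).card

/-- `embCount k n R χ i x = d_i(x)` : the number of injective color-preserving maps
`φ : Fin k → Fin n` with `φ i = x`. -/
noncomputable def embCount (k n : ℕ) (R : Fin k → Fin k → T) (χ : Fin n → Fin n → T)
    (i : Fin k) (x : Fin n) : ℕ :=
  ((Finset.univ : Finset (Fin k → Fin n)).filter
    (fun φ => Function.Injective φ ∧ φ i = x ∧
      ∀ a b : Fin k, a ≠ b → χ (φ a) (φ b) = R a b)).card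

/-- `Nset k n R χ i x = N_i(x)` : the set of vertices `y ≠ x` lying in the image of some
injective color-preserving map `φ : Fin k → Fin n` with `φ i = x`. -/
noncomputable def Nset (k n : ℕ) (R : Fin k → Fin k → T) (χ : Fin n → Fin n → T)
    (i : Fin k) (x : Fin n) : Finset (Fin n) :=
  (Finset.univ : Finset (Fin n)).filter
    (fun y => y ≠ x ∧ ∃ φ : Fin k → Fin n, Function.Injective φ ∧ φ i = x ∧
      (∀ a b : Fin k, a ≠ b → χ (φ a) (φ b) = R a b) ∧ ∃ a, φ a = y)

/-- `colorDeg χ x c = d_c(x)` : the number of vertices `y ≠ x` with `χ x y = c`. -/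
noncomputable def colorDeg {n : ℕ} (χ : Fin n → Fin n → T) (x : Fin n) (c : T) : ℕ :=
  ((Finset.univ : Finset (Fin n)).filter (fun y => y ≠ x ∧ χ x y = c)).card

end Defs

/-- Auxiliary: `S` induces a copy of `R` under the coloring `ψ`. (Reducible so that
`copyCount`/`vertDeg` unfold to filters over it definitionally.) -/
abbrev isCopyOf {T : Type} (k n : ℕ) (R : Fin k → Fin k → T) (ψ : Fin n → Fin n → T)
    (S : Finset (Fin n)) : Prop :=
  ∃ φ : Fin k → Fin n, Function.Injective φ ∧ (∀ a, φ a ∈ S) ∧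
    ∀ a b : Fin k, a ≠ b → ψ (φ a) (φ b) = R a b

lemma copyCount_eq {T : Type} (k n : ℕ) (R : Fin k → Fin k → T) (ψ : Fin n → Fin n → T) :
    copyCount k n R ψ = ((Finset.powersetCard k (Finset.univ : Finset (Fin n))).filter
      (fun S => isCopyOf k n R ψ S)).card := rfl

lemma vertDeg_eq {T : Type} (k n : ℕ) (R : Fin k → Fin k → T) (ψ : Fin n → Fin n → T)
    (z : Fin n) :
    vertDeg k n R ψ z = ((Finset.powersetCard k (Finset.univ : Finset (Fin n))).filter
      (fun S => z ∈ S ∧ isCopyOf k n R ψ S)).card := rfl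

lemma pair_subsets_card {n k : ℕ} (x y : Fin n) (hxy : x ≠ y) :
    ((Finset.powersetCard k (Finset.univ : Finset (Fin n))).filter
      (fun S => x ∈ S ∧ y ∈ S)).card ≤ (n - 2).choose (k - 2) := by
  have hcard : (Finset.powersetCard (k - 2) ((Finset.univ : Finset (Fin n)) \ {x, y})).card
      = (n - 2).choose (k - 2) := by
    rw [Finset.card_powersetCard, Finset.card_sdiff_of_subset (Finset.subset_univ _),
      Finset.card_pair hxy, Finset.card_univ, Fintype.card_fin]
  rw [← hcard]
  apply Finset.card_le_card_of_injOn (fun S => S \ {x, y})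
  · intro S hS
    simp only [Finset.mem_coe, Finset.mem_filter, Finset.mem_powersetCard] at hS ⊢
    obtain ⟨⟨-, hSk⟩, hxS, hyS⟩ := hS
    have hpair : ({x, y} : Finset (Fin n)) ⊆ S := by
      intro z hz
      simp only [Finset.mem_insert, Finset.mem_singleton] at hz
      rcases hz with rfl | rfl <;> assumption
    constructor
    · exact Finset.sdiff_subset_sdiff (Finset.subset_univ _) le_rfl
    · rw [Finset.card_sdiff_of_subset hpair, hSk, Finset.card_pair hxy]
  · intro S1 h1 S2 h2 h
    simp only [Finset.coe_filter, Set.mem_setOf_eq, Finset.mem_powersetCard] at h1 h2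
    have hp1 : ({x, y} : Finset (Fin n)) ⊆ S1 := by
      intro z hz
      simp only [Finset.mem_insert, Finset.mem_singleton] at hz
      rcases hz with rfl | rfl
      · exact h1.2.1
      · exact h1.2.2
    have hp2 : ({x, y} : Finset (Fin n)) ⊆ S2 := by
      intro z hz
      simp only [Finset.mem_insert, Finset.mem_singleton] at hz
      rcases hz with rfl | rfl
      · exact h2.2.1
      · exact h2.2.2
    rw [← Finset.sdiff_union_of_subset hp1, ← Finset.sdiff_union_of_subset hp2]
    exact congrArg (· ∪ {x, y}) h

/-- Key one-sided estimate: replacing `y` by a clone of `x` and using extremality. -/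
lemma vertDeg_le_aux {T : Type} [Fintype T] (k n : ℕ)
    (R : Fin k → Fin k → T)
    (χ : Fin n → Fin n → T) (hχ : IsSym χ)
    (hmax : copyCount k n R χ = maxCopyCount k n R)
    (x y : Fin n) (hxy : x ≠ y) :
    vertDeg k n R χ x ≤ vertDeg k n R χ y + (n - 2).choose (k - 2) := by
  classical
  set P := Finset.powersetCard k (Finset.univ : Finset (Fin n)) with hPdef
  set σ : Fin n → Fin n := fun z => if z = y then x else z with hσdef
  set τ : Fin n → Fin n := fun z => if z = x then y else z with hτdef
  set χ' : Fin n → Fin n → T := fun u v => χ (σ u) (σ v) with hχ'def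
  have hσid : ∀ z : Fin n, z ≠ y → σ z = z := by
    intro z hz; simp only [hσdef]; exact if_neg hz
  have hστ : ∀ z : Fin n, z ≠ y → σ (τ z) = z := by
    intro z hz
    by_cases hzx : z = x
    · subst hzx; simp [hτdef, hσdef]
    · simp [hτdef, hσdef, hzx, hz]
  have hsym' : IsSym χ' := fun u v => hχ _ _
  -- copies avoiding `y` agree for `χ` and `χ'`
  have hagree : ∀ S : Finset (Fin n), y ∉ S →
      (isCopyOf k n R χ' S ↔ isCopyOf k n R χ S) := by
    intro S hyS
    constructor <;> rintro ⟨φ, hinj, hmem, hcol⟩ <;> refine ⟨φ, hinj, hmem, fun a b hab => ?_⟩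
    · have h := hcol a b hab
      simp only [hχ'def] at h
      rwa [hσid _ (fun h' => hyS (h' ▸ hmem a)), hσid _ (fun h' => hyS (h' ▸ hmem b))] at h
    · simp only [hχ'def]
      rw [hσid _ (fun h' => hyS (h' ▸ hmem a)), hσid _ (fun h' => hyS (h' ▸ hmem b))]
      exact hcol a b hab
  set A := P.filter (fun S => x ∈ S ∧ y ∉ S ∧ isCopyOf k n R χ S) with hAdef
  set B := P.filter (fun S => y ∈ S ∧ x ∉ S ∧ isCopyOf k n R χ' S) with hBdef
  set C0 := P.filter (fun S => y ∉ S ∧ isCopyOf k n R χ S) with hC0def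
  set Nxy := P.filter (fun S => x ∈ S ∧ y ∈ S ∧ isCopyOf k n R χ S) with hNdef
  -- (i) copyCount χ = C0.card + vertDeg y
  have hi : copyCount k n R χ = C0.card + vertDeg k n R χ y := by
    rw [copyCount_eq, vertDeg_eq, hC0def]
    rw [← Finset.card_filter_add_card_filter_not
      (p := fun S => y ∈ S) (s := (Finset.powersetCard k (Finset.univ : Finset (Fin n))).filter
        (fun S => isCopyOf k n R χ S)),
      Finset.filter_filter, Finset.filter_filter, add_comm]
    congr 1
    · exact congrArg Finset.card (Finset.filter_congr fun S _ => by tauto)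
    · exact congrArg Finset.card (Finset.filter_congr fun S _ => by tauto)
  -- (ii) vertDeg x ≤ A.card + Nxy.card
  have hii : vertDeg k n R χ x ≤ A.card + Nxy.card := by
    rw [vertDeg_eq]
    calc ((Finset.powersetCard k (Finset.univ : Finset (Fin n))).filter
          (fun S => x ∈ S ∧ isCopyOf k n R χ S)).card
        ≤ (A ∪ Nxy).card := by
          apply Finset.card_le_card
          intro S hS
          rw [Finset.mem_filter] at hS
          rw [Finset.mem_union, hAdef, hNdef, Finset.mem_filter, Finset.mem_filter, hPdef]
          by_cases hy : y ∈ S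
          · exact Or.inr ⟨hS.1, hS.2.1, hy, hS.2.2⟩
          · exact Or.inl ⟨hS.1, hS.2.1, hy, hS.2.2⟩
      _ ≤ A.card + Nxy.card := Finset.card_union_le _ _
  -- (iii) copies of χ' avoiding y are exactly C0
  have hiii : P.filter (fun S => y ∉ S ∧ isCopyOf k n R χ' S) = C0 := by
    rw [hC0def]
    apply Finset.filter_congr
    intro S _
    constructor
    · rintro ⟨h1, h2⟩; exact ⟨h1, (hagree S h1).mp h2⟩
    · rintro ⟨h1, h2⟩; exact ⟨h1, (hagree S h1).mpr h2⟩
  -- (iv) A.card ≤ B.card via the swap map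
  have hiv : A.card ≤ B.card := by
    apply Finset.card_le_card_of_injOn (fun S => S.image τ)
    · intro S hS
      simp only [hAdef, Finset.mem_coe, Finset.mem_filter, Finset.mem_powersetCard, hPdef] at hS
      obtain ⟨⟨-, hSk⟩, hxS, hyS, φ, hinj, hmem, hcol⟩ := hS
      have hτinj : Set.InjOn τ S := by
        intro z hz w hw hzw
        simp only [hτdef] at hzw
        by_cases hzx : z = x
        · by_cases hwx : w = x
          · rw [hzx, hwx]
          · rw [if_pos hzx, if_neg hwx] at hzw
            exact absurd (by rw [hzw]; exact hw) hyS
        · by_cases hwx : w = x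
          · rw [if_neg hzx, if_pos hwx] at hzw
            exact absurd (by rw [← hzw]; exact hz) hyS
          · rwa [if_neg hzx, if_neg hwx] at hzw
      simp only [hBdef, Finset.mem_coe, Finset.mem_filter, Finset.mem_powersetCard, hPdef]
      refine ⟨⟨Finset.subset_univ _, ?_⟩, ?_, ?_, ?_⟩
      · rw [Finset.card_image_of_injOn hτinj, hSk]
      · refine Finset.mem_image.mpr ⟨x, hxS, ?_⟩
        simp [hτdef]
      · intro hx
        obtain ⟨z, hz, hzτ⟩ := Finset.mem_image.mp hx
        by_cases hzx : z = x
        · subst hzx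
          simp only [hτdef, if_pos rfl] at hzτ
          exact hxy hzτ.symm
        · simp only [hτdef, if_neg hzx] at hzτ
          exact hzx hzτ
      · refine ⟨τ ∘ φ, ?_, fun a => Finset.mem_image_of_mem τ (hmem a), fun a b hab => ?_⟩
        · intro a b hab
          exact hinj (hτinj (hmem a) (hmem b) hab)
        · show χ' (τ (φ a)) (τ (φ b)) = R a b
          simp only [hχ'def]
          rw [hστ _ (fun h' => hyS (h' ▸ hmem a)), hστ _ (fun h' => hyS (h' ▸ hmem b))]
          exact hcol a b hab
    · intro S1 h1 S2 h2 h
      simp only [hAdef, Finset.coe_filter, Set.mem_setOf_eq] at h1 h2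
      have recover : ∀ S : Finset (Fin n), y ∉ S → (S.image τ).image σ = S := by
        intro S hyS
        rw [Finset.image_image]
        ext z
        simp only [Finset.mem_image, Function.comp_apply]
        constructor
        · rintro ⟨w, hw, rfl⟩
          rwa [hστ w (fun h' => hyS (h' ▸ hw))]
        · intro hz
          exact ⟨z, hz, hστ z (fun h' => hyS (h' ▸ hz))⟩
      rw [← recover S1 h1.2.2.1, ← recover S2 h2.2.2.1]
      exact congrArg (Finset.image σ) h
  -- (v) C0.card + B.card ≤ copyCount χ'
  have hv : C0.card + B.card ≤ copyCount k n R χ' := by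
    rw [copyCount_eq, ← hiii, ← Finset.card_union_of_disjoint]
    · apply Finset.card_le_card
      intro S hS
      simp only [hBdef, hPdef, Finset.mem_union, Finset.mem_filter] at hS ⊢
      tauto
    · rw [Finset.disjoint_left]
      intro S hS1 hS2
      simp only [hBdef, Finset.mem_filter] at hS1 hS2
      exact hS1.2.1 hS2.2.1
  -- (vi) Nxy.card ≤ binom
  have hvi : Nxy.card ≤ (n - 2).choose (k - 2) := by
    refine le_trans (Finset.card_le_card ?_) (pair_subsets_card x y hxy)
    intro S hS
    simp only [hNdef, hPdef, Finset.mem_filter] at hS ⊢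
    tauto
  -- extremality
  have hle : copyCount k n R χ' ≤ copyCount k n R χ := by
    rw [hmax]
    exact Finset.le_sup (Finset.mem_filter.mpr ⟨Finset.mem_univ _, hsym'⟩)
  omega

/-- The rainbow `k`-clique: the edge `ij` gets color `{i,j}`. -/
def rainbowClique (k : ℕ) : Fin k → Fin k → Finset (Fin k) := fun i j => {i, j}

/-- A rainbow graph `G` on `[k]`, viewed as an edge-colored complete graph: edges `ij ∈ E`
get color `{i,j}`, non-edges get color `∅`. -/
noncomputable def rainbowOf {k : ℕ} (G : SimpleGraph (Fin k)) :
    Fin k → Fin k → Finset (Fin k) :=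
  fun i j => if G.Adj i j then {i, j} else ∅

/-- `B(x)` : the set of neighbors of `x`, i.e. vertices joined to `x` by a non-`∅` color. -/
noncomputable def Bset {k n : ℕ} (χ : Fin n → Fin n → Finset (Fin k)) (x : Fin n) :
    Finset (Fin n) :=
  (Finset.univ : Finset (Fin n)).filter (fun y => y ≠ x ∧ χ x y ≠ ∅)

/-- The degree of vertex `i` in the graph `G`. -/
noncomputable def degR {k : ℕ} (G : SimpleGraph (Fin k)) (i : Fin k) : ℕ :=
  ((Finset.univ : Finset (Fin k)).filter (fun j => G.Adj i j)).card

/-- In an extremal `n`-vertex colored complete graph `H` (one with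
`I(R,H) = I(R,n)`), any two vertex degrees `d(x), d(y)` differ by at most `binom(n−2,k−2)`. -/
theorem extremal_degrees_close {T : Type} [Fintype T] (k n : ℕ) (hk : 2 ≤ k)
    (R : Fin k → Fin k → T) (hR : IsSym R)
    (χ : Fin n → Fin n → T) (hχ : IsSym χ)
    (hmax : copyCount k n R χ = maxCopyCount k n R) :
    ∀ x y : Fin n,
      |(vertDeg k n R χ x : ℤ) - (vertDeg k n R χ y : ℤ)| ≤ ((n - 2).choose (k - 2) : ℤ) := by
  intro x y
  rcases eq_or_ne x y with rfl | hxy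
  · simp
  · have h1 := vertDeg_le_aux k n R χ hχ hmax x y hxy
    have h2 := vertDeg_le_aux k n R χ hχ hmax y x hxy.symm
    rw [abs_sub_le_iff]
    constructor <;> push_cast <;> omega
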